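/- Let I be a finite set, let ε, ε′ : I × I → ℤ be skew-symmetric functions, and fix k ∈ I. Let F = ℝ(Xᵢ : i ∈ I) be the field of rational functions in variables indexed by I, equipped with the Poisson bracket {f,g} = Σ_{a,b∈I} ε_{ab} X_a X_b (∂f/∂X_a)(∂g/∂X_b). Define elements μ_k(i) ∈ F for i ∈ I by: μ_k(i) = Xᵢ(1+X_k)^{−ε_{ik}} if i ≠ k and ε_{ik} ≤ 0; μ_k(i) = Xᵢ(1+X_k⁻¹)^{−ε_{ik}} if ε_{ik} > 0; and μ_k(k) = X_k⁻¹. Then the identity {μ_k(i), μ_k(j)} = ε′_{ij}·μ_k(i)·μ_k(j) holds for all i, j ∈ I if and only if for all i, j ∈ I: ε′_{ij} = −ε_{ij} when k ∈ {i,j}, and ε′_{ij} = ε_{ij} + ε_{ik}·max{0, sgn(ε_{ik})·ε_{kj}} when k ∉ {i,j}. -/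

import Mathlib

private lemma mpicr_intL1 (x y : ℤ) :
    x * max y 0 + y * max (-x) 0 = x * max 0 (x.sign * y) := by
  rcases lt_trichotomy x 0 with hx | rfl | hx
  · rw [Int.sign_eq_neg_one_iff_neg.mpr hx]
    rcases le_total y 0 with hy | hy
    · rw [max_eq_right hy, max_eq_left (by omega : (0:ℤ) ≤ -x),
        max_eq_right (by omega : (0:ℤ) ≤ -1 * y)]; ring
    · rw [max_eq_left hy, max_eq_left (by omega : (0:ℤ) ≤ -x),
        max_eq_left (by omega : -1 * y ≤ 0)]; ring
  · simp
  · rw [Int.sign_eq_one_iff_pos.mpr hx]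
    rcases le_total y 0 with hy | hy
    · rw [max_eq_right hy, max_eq_right (by omega : -x ≤ 0),
        max_eq_left (by omega : 1 * y ≤ 0)]; ring
    · rw [max_eq_left hy, max_eq_right (by omega : -x ≤ 0),
        max_eq_right (by omega : (0:ℤ) ≤ 1 * y)]; ring

private lemma mpicr_intL2 (x y : ℤ) :
    x * max (-y) 0 + y * max x 0 = x * max 0 (x.sign * y) := by
  rcases lt_trichotomy x 0 with hx | rfl | hx
  · rw [Int.sign_eq_neg_one_iff_neg.mpr hx, max_eq_right hx.le]
    rcases le_total y 0 with hy | hy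
    · rw [max_eq_left (by omega : (0:ℤ) ≤ -y), max_eq_right (by omega : (0:ℤ) ≤ -1 * y)]; ring
    · rw [max_eq_right (by omega : -y ≤ 0), max_eq_left (by omega : -1 * y ≤ 0)]; ring
  · simp
  · rw [Int.sign_eq_one_iff_pos.mpr hx, max_eq_left hx.le]
    rcases le_total y 0 with hy | hy
    · rw [max_eq_left (by omega : (0:ℤ) ≤ -y), max_eq_left (by omega : 1 * y ≤ 0)]; ring
    · rw [max_eq_right (by omega : -y ≤ 0), max_eq_right (by omega : (0:ℤ) ≤ 1 * y)]; ring

private lemma mpicr_sum_collapse {I : Type*} [Fintype I] [DecidableEq I] {F : Type*} [Field F]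
    (C : I → I → F) (i j k : I) (Pi Qi Pj Qj : F) :
    (∑ a : I, ∑ b : I, C a b * ((if a = i then Pi else 0) + (if a = k then Qi else 0))
        * ((if b = j then Pj else 0) + (if b = k then Qj else 0)))
    = C i j * Pi * Pj + C i k * Pi * Qj + C k j * Qi * Pj + C k k * Qi * Qj := by
  simp only [mul_add, add_mul, mul_ite, ite_mul, mul_zero, zero_mul,
    Finset.sum_add_distrib, Finset.sum_ite_eq', Finset.mem_univ, if_true]
  ring

private theorem mpicr_aux {I : Type*} [Fintype I] [DecidableEq I] {F : Type*} [Field F]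
    [Algebra ℝ F] [CharZero F]
    (ε ε' : I → I → ℤ) (hε : ∀ a b, ε a b = -ε b a) (k : I)
    (X : I → F) (hXne : ∀ i, X i ≠ 0) (h1k : (1 : F) + X k ≠ 0)
    (D : I → Derivation ℝ F F) (hD : ∀ a b, D a (X b) = if a = b then 1 else 0)
    (μ : I → F)
    (hμ : ∀ i, μ i = if i = k then (X k)⁻¹
      else if 0 < ε i k then X i * (1 + (X k)⁻¹) ^ (-(ε i k))
      else X i * (1 + X k) ^ (-(ε i k))) :
    ((∀ i j, (∑ a : I, ∑ b : I, (ε a b : F) * X a * X b * (D a (μ i)) * (D b (μ j)))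
        = (ε' i j : F) * μ i * μ j) ↔
      (∀ i j, ε' i j =
        if k = i ∨ k = j then -ε i j
        else ε i j + ε i k * max 0 ((ε i k).sign * ε k j))) := by
  have h1k' : (1 : F) + (X k)⁻¹ ≠ 0 := by
    intro h
    apply h1k
    have hmul : ((1 : F) + (X k)⁻¹) * X k = X k + 1 := by
      rw [add_mul, one_mul, inv_mul_cancel₀ (hXne k)]
    rw [h, zero_mul] at hmul
    rw [add_comm]; exact hmul.symm
  have hμne : ∀ i, μ i ≠ 0 := by
    intro i
    rw [hμ i]
    split_ifs with h1 h2
    · exact inv_ne_zero (hXne k)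
    · exact mul_ne_zero (hXne i) (zpow_ne_zero _ h1k')
    · exact mul_ne_zero (hXne i) (zpow_ne_zero _ h1k)
  set t : I → F := fun i =>
    if i = k then -1
    else ((max (-(ε i k)) 0 : ℤ) : F) * (X k * (1 + X k)⁻¹)
      + ((max (ε i k) 0 : ℤ) : F) * (1 + X k)⁻¹ with ht
  set P : I → F := fun i => if i = k then 0 else μ i * (X i)⁻¹ with hP
  set Q : I → F := fun i => μ i * t i * (X k)⁻¹ with hQ
  have hD1 : ∀ a, D a ((1 : F) + X k) = if a = k then 1 else 0 := by
    intro a; rw [map_add, Derivation.map_one_eq_zero, zero_add, hD]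
  have hDinv : ∀ a, D a ((X k)⁻¹) = if a = k then -((X k)⁻¹) ^ 2 else 0 := by
    intro a
    rw [Derivation.leibniz_inv, hD]
    split_ifs <;> simp [smul_eq_mul]
  have hD1' : ∀ a, D a ((1 : F) + (X k)⁻¹) = if a = k then -((X k)⁻¹) ^ 2 else 0 := by
    intro a; rw [map_add, Derivation.map_one_eq_zero, zero_add, hDinv]
  have hDμ : ∀ a i, D a (μ i)
      = (if a = i then P i else 0) + (if a = k then Q i else 0) := by
    intro a i
    rcases eq_or_ne i k with rfl | hik
    · rw [hμ i, if_pos rfl, hDinv]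
      simp only [hP, hQ, ht, hμ, if_pos rfl]
      split_ifs with h
      · ring
      · simp
    · rcases lt_or_ge 0 (ε i k) with hpos | hnp
      · have hm : μ i = X i * (1 + (X k)⁻¹) ^ (-(ε i k)) := by
          rw [hμ i, if_neg hik, if_pos hpos]
        have hmax1 : max (-(ε i k)) 0 = 0 := max_eq_right (by omega)
        have hmax2 : max (ε i k) 0 = ε i k := max_eq_left (by omega)
        rw [hm, Derivation.leibniz, Derivation.leibniz_zpow, hD1', hD,
          zpow_sub_one₀ h1k']
        simp only [hP, hQ, ht, hmax1, hmax2, if_neg hik, smul_eq_mul, zsmul_eq_mul,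
          smul_ite, smul_zero, mul_ite, mul_zero, ite_mul, zero_mul, mul_neg, smul_neg]
        by_cases hai : a = i
        · simp only [hai, if_pos rfl, if_neg hik]
          rw [hm]
          field_simp
          simp [hXne i]
        · by_cases hak : a = k
          · simp only [hak, if_pos rfl, if_neg hik,
              if_neg (show ¬ (k = i) from fun h => hai (hak.trans h))]
            simp only [if_true, Int.cast_zero, Int.cast_neg, zero_mul, add_zero, zero_add]
            rw [hm]
            generalize (1 + (X k)⁻¹ : F) ^ (-ε i k) = G
            have hs : (X k ^ 2 + X k ^ 3 : F) ≠ 0 := by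
              have hh : (X k ^ 2 + X k ^ 3 : F) = X k ^ 2 * (1 + X k) := by ring
              rw [hh]; exact mul_ne_zero (pow_ne_zero _ (hXne k)) h1k
            field_simp [hXne k, h1k, h1k', hs]
            rw [add_comm (X k) 1, mul_div_assoc, div_self h1k, mul_one]
          · simp [hai, hak]
      · have hm : μ i = X i * (1 + X k) ^ (-(ε i k)) := by
          rw [hμ i, if_neg hik, if_neg (by omega)]
        have hmax1 : max (-(ε i k)) 0 = -(ε i k) := max_eq_left (by omega)
        have hmax2 : max (ε i k) 0 = 0 := max_eq_right (by omega)
        rw [hm, Derivation.leibniz, Derivation.leibniz_zpow, hD1, hD,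
          zpow_sub_one₀ h1k]
        simp only [hP, hQ, ht, hmax1, hmax2, if_neg hik, smul_eq_mul, zsmul_eq_mul,
          smul_ite, smul_zero, mul_ite, mul_zero, ite_mul, zero_mul, mul_neg, smul_neg]
        by_cases hai : a = i
        · simp only [hai, if_pos rfl, if_neg hik]
          rw [hm]
          field_simp
          simp [hXne i]
        · by_cases hak : a = k
          · simp only [hak, if_pos rfl, if_neg hik,
              if_neg (show ¬ (k = i) from fun h => hai (hak.trans h))]
            simp only [if_true, Int.cast_zero, Int.cast_neg, zero_mul, add_zero, zero_add]
            rw [hm]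
            generalize (1 + X k : F) ^ (-ε i k) = G
            field_simp [hXne k, h1k]
          · simp [hai, hak]
  have hεkkF : ((ε k k : ℤ) : F) = 0 := by
    have h0 : ε k k = 0 := by have := hε k k; omega
    rw [h0, Int.cast_zero]
  have hμk : μ k = (X k)⁻¹ := by rw [hμ k, if_pos rfl]
  have key : ∀ i j, (∑ a : I, ∑ b : I, (ε a b : F) * X a * X b * (D a (μ i)) * (D b (μ j)))
      = ((if k = i ∨ k = j then -ε i j
          else ε i j + ε i k * max 0 ((ε i k).sign * ε k j) : ℤ) : F) * μ i * μ j := by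
    intro i j
    have e1 : (∑ a : I, ∑ b : I, (ε a b : F) * X a * X b * (D a (μ i)) * (D b (μ j)))
        = (ε i j : F) * X i * X j * P i * P j + (ε i k : F) * X i * X k * P i * Q j
          + (ε k j : F) * X k * X j * Q i * P j + (ε k k : F) * X k * X k * Q i * Q j := by
      simp only [hDμ]
      exact mpicr_sum_collapse (fun a b => (ε a b : F) * X a * X b) i j k (P i) (Q i) (P j) (Q j)
    rw [e1]
    by_cases hik : i = k
    · by_cases hjk : j = k
      · simp only [hik, hjk, hP, hεkkF, if_pos rfl, mul_zero, zero_mul, add_zero, zero_add]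
        simp only [eq_self_iff_true, true_or, or_true, if_true, ite_true]
        rw [show (-ε k k : ℤ) = 0 from by have := hε k k; omega, Int.cast_zero]
        simp
      · simp only [hik, hP, hεkkF, if_pos rfl, if_neg hjk, mul_zero, zero_mul, add_zero,
          zero_add]
        simp only [eq_self_iff_true, true_or, or_true, if_true, ite_true]
        simp only [hQ, ht, if_pos rfl, hμk]
        push_cast
        field_simp [hXne k, hXne j]
    · by_cases hjk : j = k
      · simp only [hjk, hP, hεkkF, if_pos rfl, if_neg hik, mul_zero, zero_mul, add_zero,
          zero_add]
        simp only [eq_self_iff_true, true_or, or_true, if_true, ite_true]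
        simp only [hQ, ht, if_pos rfl, hμk]
        push_cast
        field_simp [hXne k, hXne i]
      · rw [if_neg (by push_neg; exact ⟨fun h => hik h.symm, fun h => hjk h.symm⟩)]
        simp only [hP, hQ, if_neg hik, if_neg hjk, hεkkF, zero_mul, mul_zero, add_zero]
        have hXi : X i * (X i)⁻¹ = 1 := mul_inv_cancel₀ (hXne i)
        have hXj : X j * (X j)⁻¹ = 1 := mul_inv_cancel₀ (hXne j)
        have hXk : X k * (X k)⁻¹ = 1 := mul_inv_cancel₀ (hXne k)
        have huv : X k * (1 + X k)⁻¹ + (1 + X k)⁻¹ = 1 := by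
          rw [show X k * (1 + X k)⁻¹ + (1 + X k)⁻¹ = (1 + X k) * (1 + X k)⁻¹ from by ring,
            mul_inv_cancel₀ h1k]
        have h1F : ((ε i k : ℤ) : F) * ((max (ε k j) 0 : ℤ) : F)
            + ((ε k j : ℤ) : F) * ((max (-(ε i k)) 0 : ℤ) : F)
            = ((ε i k : ℤ) : F) * ((max 0 ((ε i k).sign * ε k j) : ℤ) : F) := by
          exact_mod_cast congrArg (fun z : ℤ => (z : F)) (mpicr_intL1 (ε i k) (ε k j))
        have h2F : ((ε i k : ℤ) : F) * ((max (-(ε k j)) 0 : ℤ) : F)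
            + ((ε k j : ℤ) : F) * ((max (ε i k) 0 : ℤ) : F)
            = ((ε i k : ℤ) : F) * ((max 0 ((ε i k).sign * ε k j) : ℤ) : F) := by
          exact_mod_cast congrArg (fun z : ℤ => (z : F)) (mpicr_intL2 (ε i k) (ε k j))
        have T1 : (ε i j : F) * X i * X j * (μ i * (X i)⁻¹) * (μ j * (X j)⁻¹)
            = (ε i j : F) * (μ i * μ j) := by
          rw [show (ε i j : F) * X i * X j * (μ i * (X i)⁻¹) * (μ j * (X j)⁻¹)
              = (ε i j : F) * (μ i * μ j) * (X i * (X i)⁻¹) * (X j * (X j)⁻¹) from by ring,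
            hXi, hXj, mul_one, mul_one]
        have T2 : (ε i k : F) * X i * X k * (μ i * (X i)⁻¹) * (μ j * t j * (X k)⁻¹)
            = (ε i k : F) * (μ i * μ j) * t j := by
          rw [show (ε i k : F) * X i * X k * (μ i * (X i)⁻¹) * (μ j * t j * (X k)⁻¹)
              = (ε i k : F) * (μ i * μ j) * t j * (X i * (X i)⁻¹) * (X k * (X k)⁻¹) from by
                ring,
            hXi, hXk, mul_one, mul_one]
        have T3 : (ε k j : F) * X k * X j * (μ i * t i * (X k)⁻¹) * (μ j * (X j)⁻¹)
            = (ε k j : F) * (μ i * μ j) * t i := by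
          rw [show (ε k j : F) * X k * X j * (μ i * t i * (X k)⁻¹) * (μ j * (X j)⁻¹)
              = (ε k j : F) * (μ i * μ j) * t i * (X k * (X k)⁻¹) * (X j * (X j)⁻¹) from by
                ring,
            hXk, hXj, mul_one, mul_one]
        rw [T1, T2, T3]
        simp only [ht, if_neg hik, if_neg hjk]
        rw [hε j k, neg_neg]
        push_cast
        linear_combination (μ i * μ j * (X k * (1 + X k)⁻¹)) * h1F
          + (μ i * μ j * (1 + X k)⁻¹) * h2F
          + (((ε i k : ℤ) : F) * ((max 0 ((ε i k).sign * ε k j) : ℤ) : F) * (μ i * μ j)) * huv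
  constructor
  · intro h i j
    have h1 := h i j
    rw [key i j] at h1
    have h2 := mul_right_cancel₀ (hμne i) (mul_right_cancel₀ (hμne j) h1)
    exact_mod_cast h2.symm
  · intro h i j
    rw [key i j, h i j]


/-- Let `I` be a finite set, `ε, ε' : I × I → ℤ` skew-symmetric, `k ∈ I`.  Work in the
field `F = ℝ(Xᵢ : i ∈ I)` of rational functions, with partial derivatives `∂ a` given by
any family of derivations satisfying `∂ a (X b) = δ_{ab}`, and the Poisson bracket
`{f,g} = Σ_{a,b} ε_{ab} X_a X_b (∂ a f)(∂ b g)`.  Define the mutated coordinates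
`μ_k(i)` by `μ_k(k) = X_k⁻¹`, `μ_k(i) = Xᵢ(1+X_k⁻¹)^{-ε_{ik}}` if `ε_{ik} > 0`, and
`μ_k(i) = Xᵢ(1+X_k)^{-ε_{ik}}` otherwise.  Then `{μ_k(i), μ_k(j)} = ε'_{ij} μ_k(i) μ_k(j)`
holds for all `i, j` if and only if `ε'` is obtained from `ε` by the cluster mutation rule
in the direction `k`. -/
theorem mutation_poisson_iff_cluster_rule
    {I : Type*} [Fintype I] [DecidableEq I]
    (ε ε' : I → I → ℤ)
    (hε : ∀ a b, ε a b = -ε b a) (hε' : ∀ a b, ε' a b = -ε' b a)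
    (k : I)
    (D : I → Derivation ℝ (FractionRing (MvPolynomial I ℝ))
      (FractionRing (MvPolynomial I ℝ)))
    (hD : ∀ a b, D a (algebraMap (MvPolynomial I ℝ) (FractionRing (MvPolynomial I ℝ))
      (MvPolynomial.X b)) = if a = b then 1 else 0) :
    letI F := FractionRing (MvPolynomial I ℝ)
    letI Xv : I → F := fun i => algebraMap (MvPolynomial I ℝ) F (MvPolynomial.X i)
    letI bracket : F → F → F := fun f g =>
      ∑ a : I, ∑ b : I, (ε a b : F) * Xv a * Xv b * (D a f) * (D b g)
    letI μ : I → F := fun i =>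
      if i = k then (Xv k)⁻¹
      else if 0 < ε i k then Xv i * (1 + (Xv k)⁻¹) ^ (-(ε i k))
      else Xv i * (1 + Xv k) ^ (-(ε i k))
    ((∀ i j, bracket (μ i) (μ j) = (ε' i j : F) * μ i * μ j) ↔
      (∀ i j, ε' i j =
        if k = i ∨ k = j then -ε i j
        else ε i j + ε i k * max 0 ((ε i k).sign * ε k j))) := by
  letI F := FractionRing (MvPolynomial I ℝ)
  haveI : CharZero F := charZero_of_injective_algebraMap
    (IsFractionRing.injective (MvPolynomial I ℝ) F)
  have hinj : Function.Injective (algebraMap (MvPolynomial I ℝ) F) :=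
    IsFractionRing.injective _ _
  have hXne : ∀ i : I, (algebraMap (MvPolynomial I ℝ) F) (MvPolynomial.X i) ≠ 0 := by
    intro i h
    exact MvPolynomial.X_ne_zero (R := ℝ) i (hinj (by simpa using h))
  have h1k : (1 : F) + (algebraMap (MvPolynomial I ℝ) F) (MvPolynomial.X k) ≠ 0 := by
    intro h
    have h2 : ((1 + MvPolynomial.X k : MvPolynomial I ℝ)) = 0 := by
      apply hinj
      simpa [map_add, map_one] using h
    have h3 := congrArg MvPolynomial.constantCoeff h2
    simp [MvPolynomial.constantCoeff_X] at h3
  exact mpicr_aux ε ε' hε k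
    (fun i => algebraMap (MvPolynomial I ℝ) F (MvPolynomial.X i)) hXne h1k D hD
    _ (fun i => rfl)
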